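/- If a nonempty convex set C is linearly closed and contains a line with direction vector v (i.e., x₀ + ℝ·v ⊆ C for some x₀), then C is invariant in the direction v, i.e., C + ℝ·v ⊆ C. -/
import Mathlib


open Set

def linealitySet {W : Type*} [AddCommGroup W] [Module ℝ W] (C : Set W) : Set W :=
  {v | ∀ x ∈ C, ∀ t : ℝ, x + t • v ∈ C}

def LinearlyClosed {W : Type*} [AddCommGroup W] [Module ℝ W] (C : Set W) : Prop :=
  ∀ a v : W, IsClosed {t : ℝ | a + t • v ∈ C}

theorem linearlyClosed_line_invariant
    {V : Type*} [AddCommGroup V] [Module ℝ V]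
    {C : Set V} (hC : Convex ℝ C) (hne : C.Nonempty) (hcl : LinearlyClosed C)
    {v : V} (hv : v ≠ 0) {x₀ : V} (hline : ∀ t : ℝ, x₀ + t • v ∈ C) :
    ∀ x ∈ C, ∀ t : ℝ, x + t • v ∈ C := by
  intro x hx t
  set S : Set ℝ := {s : ℝ | (x + t • v) + s • (x₀ - x) ∈ C} with hS
  have hSclosed : IsClosed S := hcl _ _
  have hsub : Ioc (0:ℝ) 1 ⊆ S := by
    intro s hs
    have hs0 : s ≠ 0 := ne_of_gt hs.1
    have hmem := hC hx (hline (t / s)) (by linarith [hs.2] : (0:ℝ) ≤ 1 - s)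
      (le_of_lt hs.1) (by ring)
    have : (1 - s) • x + s • (x₀ + (t / s) • v) = (x + t • v) + s • (x₀ - x) := by
      rw [smul_add, smul_smul, mul_div_cancel₀ _ hs0, sub_smul, smul_sub, one_smul]
      abel
    show (x + t • v) + s • (x₀ - x) ∈ C
    rw [← this]; exact hmem
  have h0 : (0:ℝ) ∈ S := by
    have := hSclosed.closure_subset_iff.mpr hsub
    rw [closure_Ioc one_ne_zero.symm] at this
    exact this (by constructor <;> norm_num)
  simpa only [hS, mem_setOf_eq, zero_smul, add_zero] using h0
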